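/- The recursion depth of the SD algorithm on a grid with n = ∏ g_i cells, where each split halves the largest dimension (into floor and ceiling halves), is at most ⌈log2 g_1⌉ + ⌈log2 g_2⌉ + ... + ⌈log2 g_k⌉, and in particular at most ⌈log2 n⌉ + k. -/

import Mathlib

/-- `RunDepth k g d`: an execution of the SD splitting process on a grid of shape
`g` (always halving a largest dimension into its floor and ceiling halves, until
all dimensions equal `1`) has recursion depth `d` (maximum number of splits along
a root-to-leaf path). -/
inductive RunDepth (k : ℕ) : (Fin k → ℕ) → ℕ → Prop where
  | done (g : Fin k → ℕ) (h : ∀ i, g i = 1) : RunDepth k g 0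
  | step (g : Fin k → ℕ) (a : Fin k) (dl dr : ℕ)
      (ha : 2 ≤ g a) (hmax : ∀ i, g i ≤ g a)
      (hl : RunDepth k (Function.update g a (g a / 2)) dl)
      (hr : RunDepth k (Function.update g a (g a - g a / 2)) dr) :
      RunDepth k g (max dl dr + 1)

private lemma clog_split_le {n : ℕ} (hn : 2 ≤ n) :
    Nat.clog 2 (n - n / 2) + 1 ≤ Nat.clog 2 n := by
  have h : n - n / 2 = (n + 2 - 1) / 2 := by omega
  rw [Nat.clog_of_two_le one_lt_two hn, ← h]

private lemma clog_half_le {n : ℕ} (hn : 2 ≤ n) :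
    Nat.clog 2 (n / 2) + 1 ≤ Nat.clog 2 n :=
  le_trans (by
    have : n / 2 ≤ n - n / 2 := by omega
    exact Nat.add_le_add_right (Nat.clog_mono_right 2 this) 1) (clog_split_le hn)

private lemma sum_clog_update {k : ℕ} (g : Fin k → ℕ) (a : Fin k) (v : ℕ)
    (h : Nat.clog 2 v + 1 ≤ Nat.clog 2 (g a)) :
    ∑ i, Nat.clog 2 (Function.update g a v i) + 1 ≤ ∑ i, Nat.clog 2 (g i) := by
  classical
  rw [← Finset.univ.add_sum_erase (fun i => Nat.clog 2 (g i)) (Finset.mem_univ a),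
      ← Finset.univ.add_sum_erase (fun i => Nat.clog 2 (Function.update g a v i))
        (Finset.mem_univ a)]
  have heq : ∑ i ∈ Finset.univ.erase a, Nat.clog 2 (Function.update g a v i)
      = ∑ i ∈ Finset.univ.erase a, Nat.clog 2 (g i) := by
    refine Finset.sum_congr rfl fun i hi => ?_
    rw [Function.update_of_ne (Finset.ne_of_mem_erase hi)]
  rw [Function.update_self, heq]
  omega

private lemma depth_le_sum {k : ℕ} : ∀ {g : Fin k → ℕ} {d : ℕ}, RunDepth k g d →
    d ≤ ∑ i, Nat.clog 2 (g i) := by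
  intro g d hd
  induction hd with
  | done g h => exact Nat.zero_le _
  | step g a dl dr ha hmax hl hr ihl ihr =>
      have h1 := sum_clog_update g a (g a / 2) (clog_half_le ha)
      have h2 := sum_clog_update g a (g a - g a / 2) (clog_split_le ha)
      omega

private lemma sum_log_le {ι : Type*} (s : Finset ι) (g : ι → ℕ) (hg : ∀ i ∈ s, 1 ≤ g i) :
    ∑ i ∈ s, Nat.log 2 (g i) ≤ Nat.log 2 (∏ i ∈ s, g i) := by
  classical
  induction s using Finset.induction with
  | empty => simp
  | insert _ _ hx ih =>
      rename_i a s
      rw [Finset.sum_insert hx, Finset.prod_insert hx]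
      have hga := hg a (Finset.mem_insert_self a s)
      have hprod : 1 ≤ ∏ i ∈ s, g i :=
        Finset.one_le_prod' fun i hi => hg i (Finset.mem_insert_of_mem hi)
      have ihs := ih fun i hi => hg i (Finset.mem_insert_of_mem hi)
      have : Nat.log 2 (g a) + Nat.log 2 (∏ i ∈ s, g i) ≤
          Nat.log 2 (g a * ∏ i ∈ s, g i) := by
        rw [Nat.le_log_iff_pow_le one_lt_two (by positivity), pow_add]
        exact Nat.mul_le_mul (Nat.pow_log_le_self 2 (by omega))
          (Nat.pow_log_le_self 2 (by omega))
      omega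

private lemma clog_le_log_succ {n : ℕ} (hn : 1 ≤ n) :
    Nat.clog 2 n ≤ Nat.log 2 n + 1 := by
  rw [Nat.clog_le_iff_le_pow one_lt_two]
  exact (Nat.lt_pow_succ_log_self one_lt_two n).le

/-- the recursion depth of the SD algorithm on a grid of shape
`g₁ × ⋯ × g_k` is at most `⌈log₂ g₁⌉ + ⋯ + ⌈log₂ g_k⌉`, and in particular at
most `⌈log₂ n⌉ + k` where `n = ∏ gᵢ`. -/
theorem sd_recursion_depth_bound (k : ℕ) (g : Fin k → ℕ) (hg : ∀ i, 1 ≤ g i)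
    (d : ℕ) (hd : RunDepth k g d) :
    d ≤ ∑ i, Nat.clog 2 (g i) ∧ d ≤ Nat.clog 2 (∏ i, g i) + k := by
  have h1 := depth_le_sum hd
  refine ⟨h1, h1.trans ?_⟩
  have h2 : ∑ i, Nat.clog 2 (g i) ≤ ∑ i, (Nat.log 2 (g i) + 1) :=
    Finset.sum_le_sum fun i _ => clog_le_log_succ (hg i)
  rw [Finset.sum_add_distrib, Finset.sum_const, Finset.card_univ, Fintype.card_fin,
    smul_eq_mul, mul_one] at h2
  have h3 := sum_log_le Finset.univ g (fun i _ => hg i)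
  have h4 := Nat.log_le_clog 2 (∏ i, g i)
  omega
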